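/- There are infinitely many pairs of consecutive natural numbers (n, n+1) such that both n and n+1 are square-prime numbers. -/

import Mathlib

def IsSP (n : ℕ) : Prop := ∃ p a : ℕ, p.Prime ∧ 2 ≤ a ∧ n = p * a ^ 2

/-- Sequence of pairs (a,b) with 7b² = 3a² + 1, giving SP twins (3a², 7b²). -/
def spSeq : ℕ → ℕ × ℕ
  | 0 => (3, 2)
  | k + 1 => (55 * (spSeq k).1 + 84 * (spSeq k).2, 36 * (spSeq k).1 + 55 * (spSeq k).2)

lemma spSeq_inv (k : ℕ) :
    7 * (spSeq k).2 ^ 2 = 3 * (spSeq k).1 ^ 2 + 1 ∧ 2 ≤ (spSeq k).1 ∧ 2 ≤ (spSeq k).2 := by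
  induction k with
  | zero => simp [spSeq]
  | succ k ih =>
    obtain ⟨h, ha, hb⟩ := ih
    refine ⟨?_, ?_, ?_⟩
    · simp only [spSeq]
      ring_nf
      ring_nf at h
      nlinarith [h]
    · simp only [spSeq]; nlinarith
    · simp only [spSeq]; nlinarith

lemma spSeq_mono : StrictMono (fun k => (spSeq k).1) := by
  apply strictMono_nat_of_lt_succ
  intro k
  obtain ⟨_, ha, hb⟩ := spSeq_inv k
  simp only [spSeq]
  nlinarith

theorem sp_twins_infinite : {n : ℕ | IsSP n ∧ IsSP (n + 1)}.Infinite := by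
  refine Set.infinite_of_injective_forall_mem
    (f := fun k : ℕ => 3 * (spSeq k).1 ^ 2) ?_ ?_
  · intro i j hij
    simp only at hij
    have := spSeq_mono.injective
    have h3 : (spSeq i).1 ^ 2 = (spSeq j).1 ^ 2 := by omega
    exact this (Nat.pow_left_injective (by norm_num) h3)
  · intro k
    obtain ⟨h, ha, hb⟩ := spSeq_inv k
    refine ⟨⟨3, (spSeq k).1, by norm_num, ha, rfl⟩, ⟨7, (spSeq k).2, by norm_num, hb, by show 3 * (spSeq k).1 ^ 2 + 1 = 7 * (spSeq k).2 ^ 2; omega⟩⟩
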